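/- Let μ_1, ..., μ_k be i.i.d. uniform on [0,1), k ≥ 1, and let 0 ≤ α_0, ..., α_N with Σ α_j ≤ 1. Let T = min_i f(μ_i) where f maps a metric in [1-Σ_{j=0}^{l}α_j, 1-Σ_{j=0}^{l-1}α_j) to lΔ for 0 ≤ l ≤ N and maps smaller metrics to a value exceeding NΔ. Then E[min(T, NΔ)] = Δ · Σ_{l=0}^{N-1} (1 - Σ_{j=0}^{l} α_j)^k. -/

import Mathlib

open MeasureTheory Finset

lemma min_ciInf_aux {k : ℕ} (hk : 0 < k) (a : Fin k → ℝ) (b : ℝ) :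
    min (⨅ i, a i) b = ⨅ i, min (a i) b := by
  have : Nonempty (Fin k) := ⟨⟨0, hk⟩⟩
  have bdd : BddBelow (Set.range a) := (Set.finite_range a).bddBelow
  have bdd2 : BddBelow (Set.range fun i => min (a i) b) := (Set.finite_range _).bddBelow
  apply le_antisymm
  · exact le_ciInf fun i => min_le_min (ciInf_le bdd i) le_rfl
  · refine le_min (le_ciInf fun i => (ciInf_le bdd2 i).trans (min_le_left _ _)) ?_
    exact (ciInf_le bdd2 (Classical.arbitrary _)).trans (min_le_right _ _)

theorem stmt11 (k N : ℕ) (hk : 1 ≤ k) (Δ : ℝ) (hΔ : 0 < Δ) (α : ℕ → ℝ)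
    (hαnn : ∀ j, 0 ≤ α j) (hsum : ∑ j ∈ Finset.range (N + 1), α j ≤ 1)
    (f : ℝ → ℝ)
    (hf1 : ∀ l ≤ N, ∀ x ∈ Set.Ico (1 - ∑ j ∈ Finset.range (l + 1), α j)
        (1 - ∑ j ∈ Finset.range l, α j), f x = l * Δ)
    (hf2 : ∀ x, x < 1 - ∑ j ∈ Finset.range (N + 1), α j → (N : ℝ) * Δ < f x) :
    ∫ ω : Fin k → ℝ, min (⨅ i, f (ω i)) ((N : ℝ) * Δ)
        ∂(Measure.pi fun _ : Fin k => volume.restrict (Set.Ico (0 : ℝ) 1))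
      = Δ * ∑ l ∈ Finset.range N, (1 - ∑ j ∈ Finset.range (l + 1), α j) ^ k := by
  have hkpos : 0 < k := hk
  have : Nonempty (Fin k) := ⟨⟨0, hkpos⟩⟩
  set μ := (Measure.pi fun _ : Fin k => volume.restrict (Set.Ico (0 : ℝ) 1)) with hμ
  set c : ℕ → ℝ := fun l => 1 - ∑ j ∈ Finset.range (l + 1), α j with hcdef
  have hsm : ∀ {a b : ℕ}, a ≤ b → ∑ j ∈ range a, α j ≤ ∑ j ∈ range b, α j := fun h =>
    Finset.sum_le_sum_of_subset_of_nonneg (Finset.range_subset_range.2 h) (fun j _ _ => hαnn j)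
  have hc0 : ∀ l, l ≤ N → 0 ≤ c l := by
    intro l hl
    have := hsm (show l + 1 ≤ N + 1 by omega)
    simp only [hcdef]; linarith
  have hc1 : ∀ l, c l ≤ 1 := by
    intro l
    have : (0:ℝ) ≤ ∑ j ∈ range (l+1), α j := Finset.sum_nonneg fun j _ => hαnn j
    simp only [hcdef]; linarith
  -- pointwise step function
  have hstep : ∀ x ∈ Set.Ico (0:ℝ) 1, min (f x) ((N:ℝ)*Δ)
      = ∑ l ∈ range N, (if x < c l then Δ else 0) := by
    intro x hx
    by_cases hxlow : x < 1 - ∑ j ∈ range (N+1), α j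
    · rw [min_eq_right (le_of_lt (hf2 x hxlow))]
      have hall : ∀ l ∈ range N, (if x < c l then Δ else 0) = Δ := by
        intro l hl
        rw [if_pos]
        have := hsm (show l + 1 ≤ N + 1 by simp at hl; omega)
        simp only [hcdef]; linarith
      rw [Finset.sum_congr rfl hall, Finset.sum_const, card_range, nsmul_eq_mul]
    · push_neg at hxlow
      have hex : ∃ l, 1 - ∑ j ∈ range (l+1), α j ≤ x := ⟨N, hxlow⟩
      set m := Nat.find hex with hm
      have hPm : 1 - ∑ j ∈ range (m+1), α j ≤ x := Nat.find_spec hex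
      have hmN : m ≤ N := Nat.find_le hxlow
      have hlt : x < 1 - ∑ j ∈ range m, α j := by
        rcases Nat.eq_zero_or_pos m with h0 | h0
        · rw [h0]; simp; linarith [hx.2]
        · have h := Nat.find_min hex (show m - 1 < m by omega)
          push_neg at h
          have : m - 1 + 1 = m := by omega
          rwa [this] at h
      have hfx : f x = m * Δ := hf1 m hmN x ⟨hPm, hlt⟩
      have hmle : (m:ℝ) * Δ ≤ (N:ℝ) * Δ := by
        apply mul_le_mul_of_nonneg_right _ hΔ.le
        exact_mod_cast hmN
      rw [hfx, min_eq_left hmle]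
      have hcond : ∀ l ∈ range N, ((x < c l) = (l < m)) := by
        intro l hl
        simp only [eq_iff_iff]
        constructor
        · intro h; by_contra hge; push_neg at hge
          have h2 : c l ≤ c m := by
            have := hsm (show m + 1 ≤ l + 1 by omega)
            simp only [hcdef]; linarith
          simp only [hcdef] at h2 hPm h ⊢
          linarith
        · intro h
          have h2 := Nat.find_min hex h
          push_neg at h2
          exact h2
      rw [Finset.sum_congr rfl (fun l hl => if_congr (by rw [hcond l hl]) rfl rfl)]
      rw [Finset.sum_ite, Finset.sum_const_zero, add_zero, Finset.sum_const]
      have hfil : (range N).filter (fun l => l < m) = range m := by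
        ext l; simp; omega
      rw [hfil, card_range, nsmul_eq_mul]
  -- a.e. membership
  have hae : ∀ᵐ ω ∂μ, ∀ i, ω i ∈ Set.Ico (0:ℝ) 1 := by
    rw [ae_all_iff]
    intro i
    have hnull : (volume.restrict (Set.Ico (0:ℝ) 1)) (Set.Ico (0:ℝ) 1)ᶜ = 0 := by
      rw [Measure.restrict_apply measurableSet_Ico.compl, Set.compl_inter_self]
      simp
    have := Measure.pi_eval_preimage_null
      (μ := fun _ : Fin k => volume.restrict (Set.Ico (0:ℝ) 1)) (i := i) hnull
    rw [ae_iff]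
    refine measure_mono_null (fun ω hω => ?_) this
    exact hω
  -- a.e. rewrite of integrand
  have haeq : ∀ᵐ ω ∂μ, min (⨅ i, f (ω i)) ((N : ℝ) * Δ)
      = ∑ l ∈ range N,
        (Set.pi Set.univ fun _ : Fin k => Set.Ico (0:ℝ) (c l)).indicator (fun _ => Δ) ω := by
    filter_upwards [hae] with ω hω
    rw [min_ciInf_aux hkpos]
    have h1 : ∀ i, min (f (ω i)) ((N:ℝ)*Δ)
        = ∑ l ∈ range N, (if ω i < c l then Δ else 0) := fun i => hstep _ (hω i)
    simp_rw [h1]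
    -- inf over i of antitone step sums = sum with max
    set g : ℝ → ℝ := fun x => ∑ l ∈ range N, (if x < c l then Δ else 0) with hg
    have hganti : ∀ {x y : ℝ}, x ≤ y → g y ≤ g x := by
      intro x y hxy
      apply Finset.sum_le_sum
      intro l hl
      by_cases h : y < c l
      · rw [if_pos h, if_pos (lt_of_le_of_lt hxy h)]
      · rw [if_neg h]
        by_cases h2 : x < c l
        · rw [if_pos h2]; exact hΔ.le
        · rw [if_neg h2]
    obtain ⟨i₀, hi₀⟩ := Finite.exists_max ω
    have hbdd : BddBelow (Set.range fun i => g (ω i)) := (Set.finite_range _).bddBelow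
    have hinf : (⨅ i, g (ω i)) = g (ω i₀) :=
      le_antisymm (ciInf_le hbdd i₀) (le_ciInf fun i => hganti (hi₀ i))
    rw [hinf, hg]
    apply Finset.sum_congr rfl
    intro l hl
    classical
    rw [Set.indicator_apply]
    have hiff : (ω ∈ Set.pi Set.univ fun _ : Fin k => Set.Ico (0:ℝ) (c l)) ↔ ω i₀ < c l := by
      simp only [Set.mem_pi, Set.mem_univ, Set.mem_Ico, forall_true_left]
      constructor
      · intro h; exact (h i₀).2
      · intro h i; exact ⟨(hω i).1, lt_of_le_of_lt (hi₀ i) h⟩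
    rw [if_congr hiff rfl rfl]
  rw [integral_congr_ae haeq]
  haveI : IsProbabilityMeasure (volume.restrict (Set.Ico (0:ℝ) 1)) := by
    constructor
    rw [Measure.restrict_apply_univ, Real.volume_Ico]
    norm_num
  haveI : IsProbabilityMeasure μ := by
    rw [hμ]; infer_instance
  have hmeas : ∀ l, MeasurableSet (Set.pi Set.univ fun _ : Fin k => Set.Ico (0:ℝ) (c l)) :=
    fun l => MeasurableSet.univ_pi fun _ => measurableSet_Ico
  rw [integral_finset_sum _ (fun l _ => (integrable_const Δ).indicator (hmeas l))]
  have hval : ∀ l ∈ range N,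
      ∫ ω, (Set.pi Set.univ fun _ : Fin k => Set.Ico (0:ℝ) (c l)).indicator (fun _ => Δ) ω ∂μ
        = c l ^ k * Δ := by
    intro l hl
    rw [integral_indicator_const _ (hmeas l)]
    have hlN : l ≤ N := by simp at hl; omega
    have hμs : μ (Set.pi Set.univ fun _ : Fin k => Set.Ico (0:ℝ) (c l))
        = ENNReal.ofReal (c l) ^ k := by
      rw [hμ, Measure.pi_pi]
      have hss : Set.Ico (0:ℝ) (c l) ∩ Set.Ico (0:ℝ) 1 = Set.Ico 0 (c l) := by
        apply Set.inter_eq_left.2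
        exact Set.Ico_subset_Ico le_rfl (hc1 l)
      have : (volume.restrict (Set.Ico (0:ℝ) 1)) (Set.Ico (0:ℝ) (c l))
          = ENNReal.ofReal (c l) := by
        rw [Measure.restrict_apply measurableSet_Ico, hss, Real.volume_Ico, sub_zero]
      rw [Finset.prod_congr rfl (fun _ _ => this), Finset.prod_const, card_univ,
        Fintype.card_fin]
    rw [measureReal_def, hμs, ← ENNReal.ofReal_pow (hc0 l hlN), ENNReal.toReal_ofReal (pow_nonneg (hc0 l hlN) k),
      smul_eq_mul]
  rw [Finset.sum_congr rfl hval, Finset.mul_sum]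
  exact Finset.sum_congr rfl fun l _ => (mul_comm _ _)
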